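/- arXiv:1310.2277 — 5 statements merged into one kernel-verified Lean document; each statement's English description precedes it below -/
import Mathlib

section
/- If H is a subgroup of a finite abelian group G, and D(G) denotes the maximum size of a subset of G containing no three-term arithmetic progression (three distinct elements a, b, c with a + c = b + b), then D(G) ≤ |G| · D(H) / |H|. -/
/-- A finset `A` in an additive group is free of three-term arithmetic progressions:
no three distinct elements `a, b, c ∈ A` satisfy `a + c = b + b`. -/
def APFree {G : Type*} [AddCommGroup G] (A : Finset G) : Prop :=
  ∀ a ∈ A, ∀ b ∈ A, ∀ c ∈ A, a ≠ b → a ≠ c → b ≠ c → a + c ≠ b + b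

theorem subgroup_bound_for_AP_free_sets
    {G : Type*} [AddCommGroup G] [Fintype G] [DecidableEq G]
    (H : AddSubgroup G) (DG DH : ℕ)
    (hDG : IsGreatest {k : ℕ | ∃ A : Finset G, APFree A ∧ A.card = k} DG)
    (hDH : IsGreatest {k : ℕ | ∃ B : Finset H, APFree B ∧ B.card = k} DH) :
    DG * Nat.card H ≤ Fintype.card G * DH := by
  obtain ⟨⟨A, hA, hcard⟩, -⟩ := hDG
  subst hcard
  haveI : Fintype H := Fintype.ofFinite H
  set B : G → Finset H := fun g => Finset.univ.filter (fun h : H => g + (h : G) ∈ A) with hB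
  have key : ∀ g : G, (B g).card ≤ DH := by
    intro g
    apply hDH.2
    refine ⟨B g, ?_, rfl⟩
    intro a ha b hb c hc hab hac hbc heq
    simp only [hB, Finset.mem_filter] at ha hb hc
    refine hA (g + a) ha.2 (g + b) hb.2 (g + c) hc.2 ?_ ?_ ?_ ?_
    · exact fun e => hab (Subtype.ext (add_left_cancel e))
    · exact fun e => hac (Subtype.ext (add_left_cancel e))
    · exact fun e => hbc (Subtype.ext (add_left_cancel e))
    · have hc' : (a : G) + (c : G) = (b : G) + (b : G) := by
        have := Subtype.ext_iff.mp heq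
        push_cast at this
        exact this
      rw [add_add_add_comm, add_add_add_comm g (b : G), hc']
  have count : ∑ g : G, (B g).card = A.card * Nat.card H := by
    simp only [hB, Finset.card_filter]
    rw [Finset.sum_comm]
    have hfix : ∀ h : H, (∑ g : G, if g + (h : G) ∈ A then 1 else 0) = A.card := by
      intro h
      rw [← Finset.card_filter]
      apply Finset.card_bij' (fun g _ => g + (h : G)) (fun a _ => a - (h : G))
      · intro g hg; simpa using (Finset.mem_filter.mp hg).2
      · intro a ha; simp [ha]
      · intro g hg; simp
      · intro a ha; simp
    rw [Finset.sum_congr rfl (fun h _ => hfix h)]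
    simp [Nat.card_eq_fintype_card, mul_comm, Finset.sum_const, Finset.card_univ]
  calc A.card * Nat.card H = ∑ g : G, (B g).card := count.symm
    _ ≤ ∑ _g : G, DH := Finset.sum_le_sum (fun g _ => key g)
    _ = Fintype.card G * DH := by simp [Finset.sum_const, Finset.card_univ]
end

section
/- Let A ⊆ ℕ be a set of nonnegative integers containing no three-term arithmetic progression (no distinct x, y, z ∈ A with x + z = 2y). Then the set G = {n ≥ 1 : for every prime p, v_p(n) ∈ A} contains no three-term geometric progression with integer ratio, i.e., there are no n ∈ G and integer r ≥ 2 with n, n·r, n·r² all in G. -/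
theorem rankin_set_free_of_integer_ratio_GPs
    (A : Set ℕ)
    (hA : ∀ x ∈ A, ∀ y ∈ A, ∀ z ∈ A, x ≠ y → x ≠ z → y ≠ z → x + z ≠ 2 * y) :
    ¬ ∃ (n r : ℕ), 1 ≤ n ∧ 2 ≤ r ∧
      (∀ p : ℕ, p.Prime → n.factorization p ∈ A) ∧
      (∀ p : ℕ, p.Prime → (n * r).factorization p ∈ A) ∧
      (∀ p : ℕ, p.Prime → (n * r ^ 2).factorization p ∈ A) := by
  rintro ⟨n, r, hn, hr, h0, h1, h2⟩
  obtain ⟨p, hp, hpr⟩ := Nat.exists_prime_and_dvd (by omega : r ≠ 1)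
  have hn0 : n ≠ 0 := by omega
  have hr0 : r ≠ 0 := by omega
  set v := n.factorization p
  set k := r.factorization p with hk
  have hk1 : 1 ≤ k := (Nat.Prime.dvd_iff_one_le_factorization hp hr0).mp hpr
  have e1 : (n * r).factorization p = v + k := by
    rw [Nat.factorization_mul hn0 hr0]; rfl
  have e2 : (n * r ^ 2).factorization p = v + 2 * k := by
    rw [Nat.factorization_mul hn0 (pow_ne_zero 2 hr0), Nat.factorization_pow]
    simp [two_mul]; rfl
  have := hA v (h0 p hp) (v + k) (by rw [← e1]; exact h1 p hp)
    (v + 2 * k) (by rw [← e2]; exact h2 p hp)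
    (by omega) (by omega) (by omega)
  omega
end

section
/- Let A ⊆ ℕ be a set of nonnegative integers containing no three-term arithmetic progression. Then the set G = {n ≥ 1 : for every prime p, v_p(n) ∈ A} contains no three-term geometric progression with rational ratio: there are no distinct a, b, c ∈ G with a·c = b². -/
theorem rankin_set_free_of_rational_ratio_GPs
    (A : Set ℕ)
    (hA : ∀ x ∈ A, ∀ y ∈ A, ∀ z ∈ A, x ≠ y → x ≠ z → y ≠ z → x + z ≠ 2 * y) :
    ¬ ∃ (a b c : ℕ), 1 ≤ a ∧ 1 ≤ b ∧ 1 ≤ c ∧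
      (∀ p : ℕ, p.Prime → a.factorization p ∈ A) ∧
      (∀ p : ℕ, p.Prime → b.factorization p ∈ A) ∧
      (∀ p : ℕ, p.Prime → c.factorization p ∈ A) ∧
      a ≠ b ∧ a ≠ c ∧ b ≠ c ∧ a * c = b ^ 2 := by
  rintro ⟨a, b, c, ha, hb, hc, hfa, hfb, hfc, hab, hac, hbc, heq⟩
  -- find a prime where a and c differ
  have ha0 : a ≠ 0 := by omega
  have hb0 : b ≠ 0 := by omega
  have hc0 : c ≠ 0 := by omega
  obtain ⟨p, hpne⟩ : ∃ p, a.factorization p ≠ c.factorization p := by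
    by_contra h
    push_neg at h
    exact hac (Nat.eq_of_factorization_eq ha0 hc0 h)
  have hp : p.Prime := by
    by_contra hp
    rw [Nat.factorization_eq_zero_of_not_prime _ hp,
      Nat.factorization_eq_zero_of_not_prime _ hp] at hpne
    exact hpne rfl
  set x := a.factorization p
  set y := b.factorization p
  set z := c.factorization p
  have hsum : x + z = 2 * y := by
    have := congrArg (fun n => n.factorization p) heq
    simp [Nat.factorization_mul ha0 hc0, Nat.factorization_pow, x, y, z] at this
    omega
  have hxz : x ≠ z := hpne
  have hxy : x ≠ y := fun h => hxz (by omega)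
  have hyz : y ≠ z := fun h => hxz (by omega)
  exact hA x (hfa p hp) y (hfb p hp) z (hfc p hp) hxy hxz hyz hsum
end

section
/- For every real N ≥ 72, the set S = {n ∈ ℕ : N/9 < n ≤ N/8} ∪ {n ∈ ℕ : N/4 < n ≤ N} contains no three-term geometric progression with integer ratio. -/
/-- Membership in the set `(N/9, N/8] ∪ (N/4, N]` for a natural number. -/
def InS (N : ℝ) (m : ℕ) : Prop :=
  (N / 9 < (m : ℝ) ∧ (m : ℝ) ≤ N / 8) ∨ (N / 4 < (m : ℝ) ∧ (m : ℝ) ≤ N)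

theorem union_of_intervals_free_of_integer_ratio_GPs (N : ℝ) (hN : 72 ≤ N) :
    ¬ ∃ (n r : ℕ), 1 ≤ n ∧ 2 ≤ r ∧
      InS N n ∧ InS N (n * r) ∧ InS N (n * r ^ 2) := by
  rintro ⟨n, r, hn, hr, h1, h2, h3⟩
  have hrR : (2:ℝ) ≤ (r:ℝ) := by exact_mod_cast hr
  have hnR : (1:ℝ) ≤ (n:ℝ) := by exact_mod_cast hn
  have hN0 : (0:ℝ) < N := by linarith
  simp only [InS] at h1 h2 h3
  push_cast at h2 h3
  rcases h1 with ⟨a1, a2⟩ | ⟨b1, b2⟩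
  · rcases h2 with ⟨c1, c2⟩ | ⟨d1, d2⟩
    · nlinarith
    · have hr3 : (3:ℝ) ≤ (r:ℝ) := by
        have h2r : (2:ℝ) < (r:ℝ) := by nlinarith
        have h2n : 2 < r := by exact_mod_cast h2r
        have : 3 ≤ r := by omega
        exact_mod_cast this
      rcases h3 with ⟨e1, e2⟩ | ⟨f1, f2⟩
      · nlinarith
      · nlinarith
  · rcases h2 with ⟨c1, c2⟩ | ⟨d1, d2⟩
    · nlinarith
    · rcases h3 with ⟨e1, e2⟩ | ⟨f1, f2⟩
      · nlinarith
      · nlinarith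
end

section
/- If m, n are positive integers with m dividing n, then λ(m)/m ≥ λ(n)/n, where λ is the Carmichael function (the exponent of the group (ℤ/nℤ)×). -/
open Finset in
lemma totient_ratio_aux {m n : ℕ} (hn : n ≠ 0) (h : m ∣ n) :
    Nat.totient n * m ≤ Nat.totient m * n := by
  have hsub : m.primeFactors ⊆ n.primeFactors := Nat.primeFactors_mono h hn
  have key : (∏ p ∈ n.primeFactors, (1 - (p : ℚ)⁻¹)) ≤
      ∏ p ∈ m.primeFactors, (1 - (p : ℚ)⁻¹) := by
    rw [← Finset.prod_sdiff hsub]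
    have h1 : (∏ p ∈ n.primeFactors \ m.primeFactors, (1 - (p : ℚ)⁻¹)) ≤ 1 := by
      apply Finset.prod_le_one
      · intro p hp
        have hp2 : (2 : ℚ) ≤ p := by
          exact_mod_cast (Nat.prime_of_mem_primeFactors (Finset.mem_sdiff.mp hp).1).two_le
        have h1 : (p:ℚ)⁻¹ ≤ 1 := by
          rw [inv_le_one_iff₀]; right; linarith
        have h2 : (0:ℚ) ≤ (p:ℚ)⁻¹ := by positivity
        linarith
      · intro p hp
        have hp2 : (2 : ℚ) ≤ p := by
          exact_mod_cast (Nat.prime_of_mem_primeFactors (Finset.mem_sdiff.mp hp).1).two_le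
        have h1 : (p:ℚ)⁻¹ ≤ 1 := by
          rw [inv_le_one_iff₀]; right; linarith
        have h2 : (0:ℚ) ≤ (p:ℚ)⁻¹ := by positivity
        linarith
    have h2 : (0 : ℚ) ≤ ∏ p ∈ m.primeFactors, (1 - (p : ℚ)⁻¹) := by
      apply Finset.prod_nonneg
      intro p hp
      have hp2 : (2 : ℚ) ≤ p := by
        exact_mod_cast (Nat.prime_of_mem_primeFactors hp).two_le
      have h1 : (p:ℚ)⁻¹ ≤ 1 := by
        rw [inv_le_one_iff₀]; right; linarith
      have h2 : (0:ℚ) ≤ (p:ℚ)⁻¹ := by positivity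
      linarith
    calc (∏ p ∈ n.primeFactors \ m.primeFactors, (1 - (p : ℚ)⁻¹)) *
          ∏ p ∈ m.primeFactors, (1 - (p : ℚ)⁻¹)
        ≤ 1 * ∏ p ∈ m.primeFactors, (1 - (p : ℚ)⁻¹) := by
          exact mul_le_mul_of_nonneg_right h1 h2
      _ = _ := one_mul _
  have := Nat.totient_eq_mul_prod_factors m
  have := Nat.totient_eq_mul_prod_factors n
  rw [← Nat.cast_le (α := ℚ)]
  push_cast
  rw [Nat.totient_eq_mul_prod_factors m, Nat.totient_eq_mul_prod_factors n]
  have hmn0 : (0:ℚ) ≤ (m:ℚ) * n := by positivity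
  calc (n:ℚ) * (∏ p ∈ n.primeFactors, (1 - (p : ℚ)⁻¹)) * m
      = ((m:ℚ) * n) * ∏ p ∈ n.primeFactors, (1 - (p : ℚ)⁻¹) := by ring
    _ ≤ ((m:ℚ) * n) * ∏ p ∈ m.primeFactors, (1 - (p : ℚ)⁻¹) :=
        mul_le_mul_of_nonneg_left key hmn0
    _ = (m:ℚ) * (∏ p ∈ m.primeFactors, (1 - (p : ℚ)⁻¹)) * n := by ring

theorem carmichael_ratio_antitone (m n : ℕ) (hm : 0 < m) (hn : 0 < n) (hmn : m ∣ n) :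
    Monoid.exponent (ZMod n)ˣ * m ≤ Monoid.exponent (ZMod m)ˣ * n := by
  haveI : NeZero m := ⟨hm.ne'⟩
  haveI : NeZero n := ⟨hn.ne'⟩
  set f := ZMod.unitsMap hmn with hf
  set K := f.ker with hK
  -- exponent of (ZMod n)ˣ divides exponent of (ZMod m)ˣ * card K
  have hdvd : Monoid.exponent (ZMod n)ˣ ∣ Monoid.exponent (ZMod m)ˣ * Nat.card K := by
    apply Monoid.exponent_dvd_of_forall_pow_eq_one
    intro g
    have hmem : g ^ Monoid.exponent (ZMod m)ˣ ∈ K := by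
      rw [MonoidHom.mem_ker, map_pow, Monoid.pow_exponent_eq_one]
    have : ((⟨g ^ Monoid.exponent (ZMod m)ˣ, hmem⟩ : K) : (ZMod n)ˣ) ^ Nat.card K = 1 := by
      rw [← Subgroup.coe_pow, pow_card_eq_one', Subgroup.coe_one]
    rw [pow_mul]
    exact this
  -- card facts
  have hsurj : Function.Surjective f := ZMod.unitsMap_surjective hmn
  have hcard : Nat.card K * Nat.totient m = Nat.totient n := by
    have h1 : Nat.card (ZMod n)ˣ = Nat.card ((ZMod n)ˣ ⧸ K) * Nat.card K :=
      Subgroup.card_eq_card_quotient_mul_card_subgroup K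
    have h2 : Nat.card ((ZMod n)ˣ ⧸ K) = Nat.card (ZMod m)ˣ :=
      Nat.card_congr (QuotientGroup.quotientKerEquivOfSurjective f hsurj).toEquiv
    have h3 : Nat.card (ZMod n)ˣ = Nat.totient n := by
      rw [Nat.card_eq_fintype_card, ZMod.card_units_eq_totient]
    have h4 : Nat.card (ZMod m)ˣ = Nat.totient m := by
      rw [Nat.card_eq_fintype_card, ZMod.card_units_eq_totient]
    rw [← h3, h1, h2, h4, mul_comm]
  -- card K * m ≤ n
  have htot : Nat.totient n * m ≤ Nat.totient m * n := totient_ratio_aux hn.ne' hmn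
  have hφm : 0 < Nat.totient m := Nat.totient_pos.mpr hm
  have hKm : Nat.card K * m ≤ n := by
    have : Nat.card K * Nat.totient m * m ≤ Nat.totient m * n := by
      rw [hcard]; exact htot
    have h' : Nat.totient m * (Nat.card K * m) ≤ Nat.totient m * n := by
      calc Nat.totient m * (Nat.card K * m) = Nat.card K * Nat.totient m * m := by ring
        _ ≤ Nat.totient m * n := this
    exact Nat.le_of_mul_le_mul_left h' hφm
  -- finish
  have hle : Monoid.exponent (ZMod n)ˣ ≤ Monoid.exponent (ZMod m)ˣ * Nat.card K := by
    apply Nat.le_of_dvd _ hdvd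
    have h1 : 0 < Monoid.exponent (ZMod m)ˣ :=
      Nat.pos_of_ne_zero Monoid.exponent_ne_zero_of_finite
    have h2 : 0 < Nat.card K := Nat.card_pos
    positivity
  calc Monoid.exponent (ZMod n)ˣ * m ≤ Monoid.exponent (ZMod m)ˣ * Nat.card K * m :=
        Nat.mul_le_mul_right m hle
    _ = Monoid.exponent (ZMod m)ˣ * (Nat.card K * m) := by ring
    _ ≤ Monoid.exponent (ZMod m)ˣ * n := Nat.mul_le_mul_left _ hKm
end
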